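/- Let F be a field, X a vector space over F, and f, g : F → X functions satisfying f(x+y) − f(x) − f(y) = g(xy) − x·g(y) − y·g(x) for all x, y ∈ F. Then there exist additive functions α, β : F → X and a function φ : F → X satisfying φ(xy) = x·φ(y) + y·φ(x) for all x, y ∈ F, such that f(x) = β(x) + (1/2)·α(x²) − x·α(x) and g(x) = φ(x) + α(x) for all x ∈ F. -/

import Mathlib

/-- A normalized symmetric biadditive Hochschild 2-cocycle. -/
structure SqData (F X : Type*) [Field F] [AddCommGroup X] [Module F X] where
  B : F → F → X
  symm : ∀ x y, B x y = B y x
  addl : ∀ x x' y, B (x + x') y = B x y + B x' y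
  coc : ∀ x y z, B (x * y) z + z • B x y = B x (y * z) + x • B y z
  one : ∀ y, B 1 y = 0

namespace SqData

variable {F X : Type*} [Field F] [AddCommGroup X] [Module F X] (D : SqData F X)

theorem addr (x y y' : F) : D.B x (y + y') = D.B x y + D.B x y' := by
  rw [D.symm, D.addl, D.symm, D.symm y']

theorem zerol (y : F) : D.B 0 y = 0 := by
  have := D.addl 0 0 y
  simp only [add_zero] at this
  exact (left_eq_add.mp this)

theorem zeror (x : F) : D.B x 0 = 0 := by rw [D.symm]; exact D.zerol x

theorem oner (x : F) : D.B x 1 = 0 := by rw [D.symm]; exact D.one x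

end SqData

/-- Square-zero extension of `F` by `X` twisted by the cocycle `D.B`. -/
def CExt {F X : Type*} [Field F] [AddCommGroup X] [Module F X] (D : SqData F X) : Type _ :=
  F × X

namespace CExt

variable {F X : Type*} [Field F] [AddCommGroup X] [Module F X] {D : SqData F X}

instance : AddCommGroup (CExt D) := inferInstanceAs (AddCommGroup (F × X))

def mk (a : F) (x : X) : CExt D := (a, x)

def fst (p : CExt D) : F := Prod.fst (α := F) (β := X) p
def snd (p : CExt D) : X := Prod.snd (α := F) (β := X) p

@[simp] theorem fst_mk (a : F) (x : X) : (mk (D := D) a x).fst = a := rfl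
@[simp] theorem snd_mk (a : F) (x : X) : (mk (D := D) a x).snd = x := rfl

@[ext] theorem ext {p q : CExt D} (h1 : p.fst = q.fst) (h2 : p.snd = q.snd) : p = q :=
  Prod.ext h1 h2

@[simp] theorem fst_add (p q : CExt D) : (p + q).fst = p.fst + q.fst := rfl
@[simp] theorem snd_add (p q : CExt D) : (p + q).snd = p.snd + q.snd := rfl
@[simp] theorem fst_zero : (0 : CExt D).fst = 0 := rfl
@[simp] theorem snd_zero : (0 : CExt D).snd = 0 := rfl
@[simp] theorem fst_neg (p : CExt D) : (-p).fst = -p.fst := rfl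
@[simp] theorem snd_neg (p : CExt D) : (-p).snd = -p.snd := rfl
@[simp] theorem fst_sub (p q : CExt D) : (p - q).fst = p.fst - q.fst := rfl
@[simp] theorem snd_sub (p q : CExt D) : (p - q).snd = p.snd - q.snd := rfl

instance : Mul (CExt D) :=
  ⟨fun p q => mk (p.fst * q.fst) (p.fst • q.snd + q.fst • p.snd + D.B p.fst q.fst)⟩

instance : One (CExt D) := ⟨mk 1 0⟩

@[simp] theorem fst_mul (p q : CExt D) : (p * q).fst = p.fst * q.fst := rfl
@[simp] theorem snd_mul (p q : CExt D) :
    (p * q).snd = p.fst • q.snd + q.fst • p.snd + D.B p.fst q.fst := rfl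
@[simp] theorem fst_one : (1 : CExt D).fst = 1 := rfl
@[simp] theorem snd_one : (1 : CExt D).snd = 0 := rfl

instance instCommRing : CommRing (CExt D) where
  __ := (inferInstance : AddCommGroup (CExt D))
  left_distrib p q r := by
    refine ext (mul_add _ _ _) ?_
    simp only [snd_mul, snd_add, fst_add, fst_mul, D.addr, smul_add, add_smul]
    module
  right_distrib p q r := by
    refine ext (add_mul _ _ _) ?_
    simp only [snd_mul, snd_add, fst_add, fst_mul, D.addl, smul_add, add_smul]
    module
  zero_mul p := by ext <;> simp [D.zerol]
  mul_zero p := by ext <;> simp [D.zeror]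
  mul_assoc p q r := by
    refine ext (mul_assoc _ _ _) ?_
    have hc := D.coc p.fst q.fst r.fst
    simp only [snd_mul, fst_mul, smul_add, smul_smul]
    rw [mul_comm r.fst p.fst]
    linear_combination (norm := module) hc
  one_mul p := by ext <;> simp [D.one]
  mul_one p := by ext <;> simp [D.oner]
  mul_comm p q := by
    refine ext (mul_comm _ _) ?_
    rw [snd_mul, snd_mul, D.symm]
    abel

end CExt

namespace CExt

variable {F X : Type*} [Field F] [AddCommGroup X] [Module F X] {D : SqData F X}

/-- The projection to `F` as a ring hom. -/
def π (D : SqData F X) : CExt D →+* F where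
  toFun := fst
  map_one' := rfl
  map_mul' _ _ := rfl
  map_zero' := rfl
  map_add' _ _ := rfl

@[simp] theorem π_apply (p : CExt D) : π D p = p.fst := rfl

theorem mul_eq_zero_of_fst_eq_zero {p q : CExt D} (hp : p.fst = 0) (hq : q.fst = 0) :
    p * q = 0 := by
  ext
  · simp [hp]
  · simp [hp, hq, D.zerol]

theorem isUnit_of_fst_ne_zero {p : CExt D} (hp : p.fst ≠ 0) : IsUnit p := by
  refine IsUnit.of_mul_eq_one (a := p)
    (mk p.fst⁻¹ (-((p.fst⁻¹ * p.fst⁻¹) • p.snd) - p.fst⁻¹ • D.B p.fst p.fst⁻¹)) ?_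
  ext
  · simp [mul_inv_cancel₀ hp]
  · simp only [snd_mul, fst_mk, snd_mk, smul_sub, smul_neg, smul_smul, snd_one,
      mul_inv_cancel₀ hp]
    rw [show p.fst * (p.fst⁻¹ * p.fst⁻¹) = p.fst⁻¹ by field_simp]
    module

theorem fst_ne_zero_of_isUnit {p : CExt D} (hp : IsUnit p) : p.fst ≠ 0 := by
  rcases hp with ⟨u, rfl⟩
  intro h0
  have : ((u : CExt D) * ↑u⁻¹).fst = 1 := by rw [u.mul_inv]; rfl
  rw [fst_mul, h0, zero_mul] at this
  exact zero_ne_one this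

@[simp] theorem fst_natCast (n : ℕ) : ((n : CExt D)).fst = (n : F) :=
  map_natCast (π D) n

@[simp] theorem snd_natCast (n : ℕ) : ((n : CExt D)).snd = 0 := by
  induction n with
  | zero => simp
  | succ k ih => rw [Nat.cast_succ]; simp [ih]

@[simp] theorem fst_intCast (n : ℤ) : ((n : CExt D)).fst = (n : F) :=
  map_intCast (π D) n

@[simp] theorem snd_intCast (n : ℤ) : ((n : CExt D)).snd = 0 := by
  cases n with
  | ofNat m => simp [Int.cast_natCast]
  | negSucc m => rw [Int.cast_negSucc]; simp

theorem charP (p : ℕ) [CharP F p] : CharP (CExt D) p := by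
  constructor
  intro n
  rw [← CharP.cast_eq_zero_iff F p n]
  constructor
  · intro hn
    have := congrArg fst hn
    simpa using this
  · intro hn
    ext <;> simp [hn]

end CExt

section Taylor

variable {R : Type*} [CommRing R]

theorem pow_add_of_sq_zero (r δ : R) (hδ : δ * δ = 0) (n : ℕ) :
    (r + δ) ^ n = r ^ n + (n : R) * r ^ (n - 1) * δ := by
  induction n with
  | zero => simp
  | succ k ih =>
    rw [pow_succ, ih]
    rcases Nat.eq_zero_or_pos k with hk | hk
    · subst hk; push_cast; ring
    · have h1 : r ^ (k - 1) * r = r ^ k := by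
        rw [← pow_succ]; congr 1; omega
      push_cast
      linear_combination ((k : R) * r ^ (k-1)) * hδ + ((k : R) * δ) * h1

theorem eval₂_add_of_sq_zero {A : Type*} [CommRing A] (f : A →+* R) (q : Polynomial A)
    (r δ : R) (hδ : δ * δ = 0) :
    Polynomial.eval₂ f (r + δ) q
      = Polynomial.eval₂ f r q + Polynomial.eval₂ f r (Polynomial.derivative q) * δ := by
  induction q using Polynomial.induction_on' with
  | add p q hp hq =>
    simp only [Polynomial.eval₂_add, Polynomial.derivative_add]
    rw [hp, hq]
    ring
  | monomial n a =>
    simp only [Polynomial.eval₂_monomial, Polynomial.derivative_monomial, Polynomial.eval₂_mul,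
      Polynomial.eval₂_natCast, pow_add_of_sq_zero r δ hδ n, map_mul, map_natCast]
    ring

end Taylor

section CoeffLemma

open Polynomial

theorem coeff_X_sub_C_pow_pred {F : Type*} [Field F] (t : F) :
    ∀ i : ℕ, 1 ≤ i → ((X - C t) ^ i).coeff (i - 1) = -(i : F) * t := by
  intro i
  induction i with
  | zero => intro h; omega
  | succ k ih =>
    intro _
    rcases Nat.eq_zero_or_pos k with hk | hk
    · subst hk; simp
    · have hstep : ((X - C t) ^ (k + 1)).coeff k
          = ((X - C t) ^ k).coeff (k - 1) - ((X - C t) ^ k).coeff k * t := by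
        have := coeff_mul_X_sub_C (p := (X - C t) ^ k) (r := t) (a := k - 1)
        rw [show k - 1 + 1 = k by omega] at this
        rw [pow_succ, this]
      have hlead : ((X - C t) ^ k).coeff k = 1 := by
        have hm : ((X - C t) ^ k).Monic := (monic_X_sub_C t).pow k
        have hdeg : ((X - C t) ^ k).natDegree = k := by
          rw [natDegree_pow, natDegree_X_sub_C, mul_one]
        have := hm.coeff_natDegree
        rwa [hdeg] at this
      have hksub : (k + 1 : ℕ) - 1 = k := by omega
      rw [hksub, hstep, ih hk, hlead]
      push_cast
      ring

end CoeffLemma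

namespace SqData

open Polynomial

variable {F X : Type*} [Field F] [AddCommGroup X] [Module F X]

theorem exists_section (D : SqData F X) :
    ∃ α : F → X, (∀ a b : F, α (a + b) = α a + α b) ∧
      ∀ a b : F, D.B a b = α (a * b) - a • α b - b • α a := by
  obtain ⟨p, hp⟩ := CharP.exists F
  haveI := hp
  haveI : CharP (CExt D) p := CExt.charP p
  -- the base subring
  obtain ⟨S₀, hS₀good, hS₀pow⟩ :
      ∃ S₀ : Subring (CExt D), (∀ r ∈ S₀, r.fst = 0 → r = 0) ∧
        (p ≠ 0 → ∀ r : CExt D, r ^ p ∈ S₀) := by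
    rcases CharP.char_is_prime_or_zero F p with hpp | hp0
    · haveI : Fact p.Prime := ⟨hpp⟩
      refine ⟨{ carrier := {r : CExt D | ∃ y : CExt D, y ^ p = r}
                mul_mem' := ?_
                one_mem' := ⟨1, one_pow p⟩
                add_mem' := ?_
                zero_mem' := ⟨0, zero_pow hpp.ne_zero⟩
                neg_mem' := ?_ }, ?_, ?_⟩
      · rintro a b ⟨x, rfl⟩ ⟨y, rfl⟩; exact ⟨x * y, mul_pow x y p⟩
      · rintro a b ⟨x, rfl⟩ ⟨y, rfl⟩; exact ⟨x + y, by rw [add_pow_char]⟩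
      · rintro a ⟨x, rfl⟩
        exact ⟨-x, by rw [neg_pow, neg_one_pow_char (CExt D) p, neg_one_mul]⟩
      · rintro r ⟨y, rfl⟩ hy0
        have hyfst : y.fst = 0 := by
          have hmp : (y ^ p).fst = y.fst ^ p := map_pow (CExt.π D) y p
          rw [hmp] at hy0
          exact pow_eq_zero_iff hpp.ne_zero |>.mp hy0
        have hyy : y * y = 0 := CExt.mul_eq_zero_of_fst_eq_zero hyfst hyfst
        have hsplit : y ^ p = y ^ (p - 2) * (y * y) := by
          rw [← pow_two, ← pow_add]
          congr 1
          have := hpp.two_le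
          omega
        rw [hsplit, hyy, mul_zero]
      · intro _ r; exact ⟨r, rfl⟩
    · subst hp0
      haveI : CharZero F := CharP.charP_to_charZero F
      refine ⟨⊥, ?_, fun h => absurd rfl h⟩
      intro r hr hr0
      rw [Subring.mem_bot] at hr
      obtain ⟨n, rfl⟩ := hr
      have : (n : F) = 0 := by rw [← CExt.fst_intCast (D := D) n, hr0]
      have : n = 0 := by exact_mod_cast this
      simp [this]
  -- Zorn
  set 𝒮 : Set (Subring (CExt D)) :=
    {S | S₀ ≤ S ∧ ∀ r ∈ S, r.fst = 0 → r = 0} with h𝒮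
  obtain ⟨S, -, hmax⟩ : ∃ S, S₀ ≤ S ∧ Maximal (· ∈ 𝒮) S := by
    refine zorn_le_nonempty₀ 𝒮 ?_ S₀ ⟨le_rfl, hS₀good⟩
    intro c hc hchain y hy
    refine ⟨sSup c, ⟨((hc hy).1).trans (le_sSup hy), ?_⟩, fun z hz => le_sSup hz⟩
    intro r hr hr0
    rw [← SetLike.mem_coe, Subring.coe_sSup_of_directedOn ⟨y, hy⟩ hchain.directedOn] at hr
    simp only [Set.mem_iUnion, SetLike.mem_coe] at hr
    obtain ⟨T, hT, hrT⟩ := hr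
    exact (hc hT).2 r hrT hr0
  have hbase : S₀ ≤ S := hmax.1.1
  have hgood : ∀ r ∈ S, r.fst = 0 → r = 0 := hmax.1.2
  have hπinj : ∀ r ∈ S, ∀ r' ∈ S, r.fst = r'.fst → r = r' := by
    intro r hr r' hr' hfst
    have hmem : r - r' ∈ S := sub_mem hr hr'
    have : (r - r').fst = 0 := by rw [CExt.fst_sub, hfst, sub_self]
    have := hgood _ hmem this
    exact sub_eq_zero.mp this
  -- inverse closure
  have hinv : ∀ s ∈ S, s.fst ≠ 0 → ∃ r ∈ S, r * s = 1 := by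
    intro s hs hs0
    obtain ⟨u, hu⟩ := CExt.isUnit_of_fst_ne_zero (D := D) hs0
    have hru : (↑u⁻¹ : CExt D) * s = 1 := by rw [← hu]; exact u.inv_mul
    set S' : Subring (CExt D) := (Polynomial.eval₂RingHom S.subtype (↑u⁻¹ : CExt D)).range
      with hS'def
    have hSS' : S ≤ S' := by
      intro z hz
      exact ⟨Polynomial.C ⟨z, hz⟩, Polynomial.eval₂_C _ _⟩
    have hS'good : ∀ z ∈ S', z.fst = 0 → z = 0 := by
      rintro z ⟨q, rfl⟩ hz0
      have hzq : (Polynomial.eval₂RingHom S.subtype (↑u⁻¹ : CExt D)) q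
          = Polynomial.eval₂ S.subtype (↑u⁻¹ : CExt D) q := rfl
      rw [hzq] at hz0 ⊢
      set n := q.natDegree with hn
      have hmem : s ^ n * Polynomial.eval₂ S.subtype (↑u⁻¹ : CExt D) q ∈ S := by
        rw [Polynomial.eval₂_eq_sum_range, Finset.mul_sum]
        refine sum_mem fun i hi => ?_
        have hi' : i ≤ n := Nat.lt_succ_iff.mp (Finset.mem_range.mp hi)
        have hpow : s ^ n * (↑u⁻¹ : CExt D) ^ i = s ^ (n - i) := by
          rw [← hu]
          rw [← Units.val_pow_eq_pow_val, ← Units.val_pow_eq_pow_val, ← Units.val_mul,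
            ← Units.val_pow_eq_pow_val]
          congr 1
          rw [inv_pow, mul_inv_eq_iff_eq_mul, ← pow_add]
          congr 1
          omega
        have hre : s ^ n * (S.subtype (q.coeff i) * (↑u⁻¹ : CExt D) ^ i)
            = ↑(q.coeff i) * (s ^ n * (↑u⁻¹ : CExt D) ^ i) := by
          show s ^ n * (↑(q.coeff i) * _) = _
          ring
        rw [hre, hpow]
        exact S.mul_mem (q.coeff i).2 (pow_mem hs _)
      have hfst : (s ^ n * Polynomial.eval₂ S.subtype (↑u⁻¹ : CExt D) q).fst = 0 := by
        rw [CExt.fst_mul, hz0, mul_zero]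
      have h0 := hgood _ hmem hfst
      have hsu : IsUnit (s ^ n) := (show IsUnit s from ⟨u, hu⟩).pow n
      exact (IsUnit.mul_right_eq_zero hsu).mp h0
    have hle : S' ≤ S := hmax.2 ⟨hbase.trans hSS', hS'good⟩ hSS'
    exact ⟨↑u⁻¹, hle ⟨Polynomial.X, Polynomial.eval₂_X _ _⟩, hru⟩
  -- the subfield K
  set K : Subfield F :=
    { S.map (CExt.π D) with
      inv_mem' := by
        rintro x ⟨s, hs, rfl⟩
        rcases eq_or_ne (CExt.π D s) 0 with h0 | h0
        · rw [h0, inv_zero]; exact ⟨s, hs, h0⟩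
        · obtain ⟨r, hrS, hrs⟩ := hinv s hs h0
          have hmul : (CExt.π D r) * (CExt.π D s) = 1 := by
            rw [← map_mul, hrs, map_one]
          exact ⟨r, hrS, eq_inv_of_mul_eq_one_left hmul⟩ } with hK
  have hKmem : ∀ a : F, a ∈ K ↔ ∃ s ∈ S, s.fst = a := by
    intro a
    constructor
    · rintro ⟨s, hs, rfl⟩; exact ⟨s, hs, rfl⟩
    · rintro ⟨s, hs, rfl⟩; exact ⟨s, hs, rfl⟩
  -- the lift ρ : K →+* CExt D
  have hchoice : ∀ k : ↥K, ∃ s : CExt D, s ∈ S ∧ s.fst = ↑k := fun k => (hKmem ↑k).mp k.2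
  choose ρf hρS hρfst using hchoice
  have hρmk : ∀ (a b : ↥K), (↑a * ↑b : F) = ↑(a * b) := fun a b => rfl
  let ρ : ↥K →+* CExt D :=
    { toFun := ρf
      map_one' := hπinj _ (hρS 1) _ S.one_mem (by rw [hρfst]; rfl)
      map_mul' := fun a b => hπinj _ (hρS (a * b)) _ (S.mul_mem (hρS a) (hρS b))
        (by rw [hρfst, CExt.fst_mul, hρfst, hρfst]; rfl)
      map_zero' := hπinj _ (hρS 0) _ S.zero_mem (by rw [hρfst]; rfl)
      map_add' := fun a b => hπinj _ (hρS (a + b)) _ (S.add_mem (hρS a) (hρS b))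
        (by rw [hρfst, CExt.fst_add, hρfst, hρfst]; rfl) }
  have hρS' : ∀ k : ↥K, ρ k ∈ S := hρS
  have hρfst' : ∀ k : ↥K, (ρ k).fst = ↑k := hρfst
  have halgmap : (algebraMap ↥K F) = K.subtype := rfl
  have htransfer : ∀ (q : Polynomial ↥K) (r : CExt D),
      (Polynomial.eval₂ ρ r q).fst = Polynomial.eval₂ (algebraMap ↥K F) r.fst q := by
    intro q r
    have := Polynomial.hom_eval₂ q ρ (CExt.π D) r
    rw [CExt.π_apply] at this
    rw [this]
    congr 1
    refine RingHom.ext fun k => ?_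
    rw [RingHom.comp_apply, CExt.π_apply, hρfst', halgmap]
    rfl
  -- K = F
  have hKtop : ∀ t : F, t ∈ K := by
    by_contra hcon
    push_neg at hcon
    obtain ⟨t, ht⟩ := hcon
    have hadj : ∀ r : CExt D, r.fst = t →
        (∀ q : Polynomial ↥K, (Polynomial.eval₂ ρ r q).fst = 0 →
          Polynomial.eval₂ ρ r q = 0) → False := by
      intro r hrt hgood'
      have hSS' : S ≤ (Polynomial.eval₂RingHom ρ r).range := by
        intro z hz
        have hzK : z.fst ∈ K := (hKmem _).mpr ⟨z, hz, rfl⟩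
        refine ⟨Polynomial.C ⟨z.fst, hzK⟩, ?_⟩
        show Polynomial.eval₂ ρ r (Polynomial.C ⟨z.fst, hzK⟩) = z
        rw [Polynomial.eval₂_C]
        exact hπinj _ (hρS' _) _ hz (by rw [hρfst'])
      have hgood'' : ∀ z ∈ (Polynomial.eval₂RingHom ρ r).range, z.fst = 0 → z = 0 := by
        rintro z ⟨q, rfl⟩ h0
        exact hgood' q h0
      have hle := hmax.2 ⟨hbase.trans hSS', hgood''⟩ hSS'
      have hrS : r ∈ S := hle ⟨Polynomial.X, Polynomial.eval₂_X _ _⟩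
      exact ht ((hKmem t).mpr ⟨r, hrS, hrt⟩)
    by_cases halg : ∃ q : Polynomial ↥K, q ≠ 0 ∧ Polynomial.eval₂ (algebraMap ↥K F) t q = 0
    · -- algebraic case
      obtain ⟨q0, hq0ne, hq0⟩ := halg
      have halg' : IsAlgebraic ↥K t := ⟨q0, hq0ne, by rwa [Polynomial.aeval_def]⟩
      have hint : IsIntegral ↥K t := halg'.isIntegral
      have hmonic : (minpoly ↥K t).Monic := minpoly.monic hint
      have hm0 : Polynomial.eval₂ (algebraMap ↥K F) t (minpoly ↥K t) = 0 := by
        rw [← Polynomial.aeval_def]; exact minpoly.aeval ↥K t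
      have hmin : ∀ q : Polynomial ↥K, q ≠ 0 →
          Polynomial.eval₂ (algebraMap ↥K F) t q = 0 →
          (minpoly ↥K t).degree ≤ q.degree := fun q hq hqv =>
        minpoly.degree_le_of_ne_zero ↥K t hq (by rwa [Polynomial.aeval_def])
      have hcommon : ∀ r : CExt D, r.fst = t → ∀ M : Polynomial ↥K, M.Monic →
          Polynomial.eval₂ ρ r M = 0 →
          (∀ q : Polynomial ↥K, q ≠ 0 → Polynomial.eval₂ (algebraMap ↥K F) t q = 0 →
            M.degree ≤ q.degree) → False := by
        intro r hrt M hM hM0 hminM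
        refine hadj r hrt ?_
        intro q hq
        have hq_eq : Polynomial.eval₂ ρ r q = Polynomial.eval₂ ρ r (q %ₘ M) := by
          conv_lhs => rw [← Polynomial.modByMonic_add_div q M]
          rw [Polynomial.eval₂_add, Polynomial.eval₂_mul, hM0, zero_mul, add_zero]
        rw [hq_eq] at hq ⊢
        have hvan : Polynomial.eval₂ (algebraMap ↥K F) t (q %ₘ M) = 0 := by
          rw [← hrt, ← htransfer]; exact hq
        have hrem0 : q %ₘ M = 0 := by
          by_contra hne
          have h1 := hminM _ hne hvan
          have h2 := Polynomial.degree_modByMonic_lt q hM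
          exact absurd (h1.trans_lt h2) (lt_irrefl _)
        rw [hrem0, Polynomial.eval₂_zero]
      by_cases hder : Polynomial.eval₂ (algebraMap ↥K F) t
          (Polynomial.derivative (minpoly ↥K t)) = 0
      · -- derivative vanishes at t : forces char p and inseparability
        have hmder : Polynomial.derivative (minpoly ↥K t) = 0 := by
          by_contra hne
          have h1 := hmin _ hne hder
          have h2 := Polynomial.degree_derivative_lt (minpoly.ne_zero hint)
          exact absurd (h1.trans_lt h2) (lt_irrefl _)
        have hppos : p ≠ 0 := by
          rintro rfl
          haveI : CharZero F := CharP.charP_to_charZero F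
          haveI : CharZero ↥K := ⟨fun a b hab => by
            have hc := congrArg K.subtype hab
            rw [map_natCast, map_natCast] at hc
            exact Nat.cast_injective hc⟩
          have hd0 := Polynomial.natDegree_eq_zero_of_derivative_eq_zero hmder
          exact absurd hd0 (minpoly.natDegree_pos hint).ne'
        have hpp : p.Prime := (CharP.char_is_prime_or_zero F p).resolve_right hppos
        haveI : Fact p.Prime := ⟨hpp⟩
        have hr₀fst : (CExt.mk t 0 : CExt D).fst = t := rfl
        have hr₀S : (CExt.mk t 0 : CExt D) ^ p ∈ S := hbase (hS₀pow hppos _)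
        have hr₀pfst : ((CExt.mk t 0 : CExt D) ^ p).fst = t ^ p := by
          have := map_pow (CExt.π D) (CExt.mk t 0 : CExt D) p
          rw [CExt.π_apply, CExt.π_apply, hr₀fst] at this
          exact this
        have haK : t ^ p ∈ K := (hKmem _).mpr ⟨_, hr₀S, hr₀pfst⟩
        have hM₀monic : (Polynomial.X ^ p - Polynomial.C (⟨t ^ p, haK⟩ : ↥K)).Monic :=
          Polynomial.monic_X_pow_sub_C _ hppos
        have haevM₀ : Polynomial.aeval t
            (Polynomial.X ^ p - Polynomial.C (⟨t ^ p, haK⟩ : ↥K)) = 0 := by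
          rw [map_sub, map_pow, Polynomial.aeval_X, Polynomial.aeval_C, halgmap]
          show t ^ p - t ^ p = 0
          rw [sub_self]
        have hev0 : Polynomial.eval₂ ρ (CExt.mk t 0)
            (Polynomial.X ^ p - Polynomial.C (⟨t ^ p, haK⟩ : ↥K)) = 0 := by
          rw [Polynomial.eval₂_sub, Polynomial.eval₂_X_pow, Polynomial.eval₂_C]
          have hρa : ρ ⟨t ^ p, haK⟩ = (CExt.mk t 0 : CExt D) ^ p :=
            hπinj _ (hρS' _) _ hr₀S (by rw [hρfst', hr₀pfst])
          rw [hρa, sub_self]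
        -- natDegree of the minimal polynomial is p
        have hdvd : minpoly ↥K t ∣ (Polynomial.X ^ p - Polynomial.C (⟨t ^ p, haK⟩ : ↥K)) :=
          minpoly.dvd ↥K t haevM₀
        have hmapdvd : (minpoly ↥K t).map (algebraMap ↥K F)
            ∣ (Polynomial.X - Polynomial.C t) ^ p := by
          have h1 := Polynomial.map_dvd (algebraMap ↥K F) hdvd
          have h2 : (Polynomial.X ^ p - Polynomial.C (⟨t ^ p, haK⟩ : ↥K)).map
              (algebraMap ↥K F) = (Polynomial.X - Polynomial.C t) ^ p := by
            rw [Polynomial.map_sub, Polynomial.map_pow, Polynomial.map_X, Polynomial.map_C,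
              sub_pow_char, halgmap]
            show _ - Polynomial.C (t ^ p) = _
            rw [Polynomial.C_pow]
          rw [← h2]; exact h1
        obtain ⟨i, hip, hassoc⟩ := (dvd_prime_pow (Polynomial.prime_X_sub_C t) p).mp hmapdvd
        have heqpow : (minpoly ↥K t).map (algebraMap ↥K F)
            = (Polynomial.X - Polynomial.C t) ^ i :=
          Polynomial.eq_of_monic_of_associated (hmonic.map _)
            ((Polynomial.monic_X_sub_C t).pow i) hassoc
        have hndeg : (minpoly ↥K t).natDegree = i := by
          have h1 : ((minpoly ↥K t).map (algebraMap ↥K F)).natDegree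
              = (minpoly ↥K t).natDegree := Polynomial.natDegree_map _
          rw [heqpow] at h1
          rw [← h1, Polynomial.natDegree_pow, Polynomial.natDegree_X_sub_C, mul_one]
        have hip' : i = p := by
          by_contra hne
          have hilt : i < p := lt_of_le_of_ne hip hne
          have hipos : 1 ≤ i := by
            have := minpoly.natDegree_pos hint
            omega
          have hcoeff := congrArg (fun q => Polynomial.coeff q (i - 1)) heqpow
          simp only [Polynomial.coeff_map] at hcoeff
          rw [coeff_X_sub_C_pow_pred t i hipos] at hcoeff
          have hmem : (-(i : F) * t : F) ∈ K := by
            rw [← hcoeff, halgmap]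
            exact SetLike.coe_mem _
          have hi0 : (i : F) ≠ 0 := by
            intro h0
            rw [CharP.cast_eq_zero_iff F p i] at h0
            have := Nat.le_of_dvd (by omega) h0
            omega
          refine ht ?_
          have h1 : t = (-(i : F))⁻¹ * (-(i : F) * t) := by field_simp
          rw [h1]
          exact K.mul_mem (K.inv_mem (K.neg_mem (natCast_mem K i))) hmem
        have hminM₀ : ∀ q : Polynomial ↥K, q ≠ 0 →
            Polynomial.eval₂ (algebraMap ↥K F) t q = 0 →
            (Polynomial.X ^ p - Polynomial.C (⟨t ^ p, haK⟩ : ↥K)).degree ≤ q.degree := by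
          intro q hq hqv
          have h1 := hmin q hq hqv
          have hdegM₀ := Polynomial.degree_X_pow_sub_C (Nat.pos_of_ne_zero hppos)
            (⟨t ^ p, haK⟩ : ↥K)
          have hdegm : (minpoly ↥K t).degree = ((p : ℕ) : WithBot ℕ) := by
            rw [Polynomial.degree_eq_natDegree (minpoly.ne_zero hint), hndeg, hip']
          rw [hdegM₀]
          rw [hdegm] at h1
          exact h1
        exact hcommon (CExt.mk t 0) hr₀fst _ hM₀monic hev0 hminM₀
      · -- Newton's method
        have hderfst : (Polynomial.eval₂ ρ (CExt.mk t 0)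
            (Polynomial.derivative (minpoly ↥K t))).fst ≠ 0 := by
          rw [htransfer]
          exact hder
        obtain ⟨u, hu⟩ := CExt.isUnit_of_fst_ne_zero (D := D) hderfst
        set em : CExt D := Polynomial.eval₂ ρ (CExt.mk t 0) (minpoly ↥K t) with hem
        have hemfst : em.fst = 0 := by
          rw [hem, htransfer]
          exact hm0
        set δ : CExt D := -(↑u⁻¹ * em) with hδ
        have hδfst : δ.fst = 0 := by
          rw [hδ, CExt.fst_neg, CExt.fst_mul, hemfst, mul_zero, neg_zero]
        have hδδ : δ * δ = 0 := CExt.mul_eq_zero_of_fst_eq_zero hδfst hδfst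
        have hrfst : (CExt.mk t 0 + δ).fst = t := by
          rw [CExt.fst_add, hδfst, add_zero]; rfl
        have hr0 : Polynomial.eval₂ ρ (CExt.mk t 0 + δ) (minpoly ↥K t) = 0 := by
          rw [eval₂_add_of_sq_zero ρ (minpoly ↥K t) (CExt.mk t 0) δ hδδ, ← hem, hδ, ← hu,
            mul_neg, ← mul_assoc, u.mul_inv, one_mul, add_neg_cancel]
        exact hcommon (CExt.mk t 0 + δ) hrfst _ hmonic hr0 hmin
    · -- transcendental case
      refine hadj (CExt.mk t 0) rfl ?_
      intro q hq
      rw [htransfer] at hq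
      have hq0 : q = 0 := by
        by_contra hne
        exact halg ⟨q, hne, hq⟩
      rw [hq0, Polynomial.eval₂_zero]
  -- build α
  let σ : F → CExt D := fun a => ρ ⟨a, hKtop a⟩
  have hσfst : ∀ a, (σ a).fst = a := fun a => hρfst' _
  refine ⟨fun a => (σ a).snd, ?_, ?_⟩
  · intro a b
    show (σ (a + b)).snd = (σ a).snd + (σ b).snd
    have : σ (a + b) = σ a + σ b := by
      show ρ ⟨a + b, _⟩ = ρ ⟨a, _⟩ + ρ ⟨b, _⟩
      rw [← RingHom.map_add ρ]
      rfl
    rw [this, CExt.snd_add]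
  · intro a b
    show D.B a b = (σ (a * b)).snd - a • (σ b).snd - b • (σ a).snd
    have : σ (a * b) = σ a * σ b := by
      show ρ ⟨a * b, _⟩ = ρ ⟨a, _⟩ * ρ ⟨b, _⟩
      rw [← RingHom.map_mul ρ]
      rfl
    have hsnd := congrArg CExt.snd this
    rw [CExt.snd_mul, hσfst, hσfst] at hsnd
    rw [hsnd]
    abel

end SqData

theorem stmt_0 {F X : Type*} [Field F] [AddCommGroup X] [Module F X]
    (hchar : (2 : F) ≠ 0)
    (f g : F → X)
    (h : ∀ x y : F, f (x + y) - f x - f y = g (x * y) - x • g y - y • g x) :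
    ∃ (α β φ : F → X),
      (∀ x y : F, α (x + y) = α x + α y) ∧
      (∀ x y : F, β (x + y) = β x + β y) ∧
      (∀ x y : F, φ (x * y) = x • φ y + y • φ x) ∧
      (∀ x : F, f x = β x + (2 : F)⁻¹ • α (x ^ 2) - x • α x) ∧
      (∀ x : F, g x = φ x + α x) := by
  have coc : ∀ x y z : F,
      (g (x*y) - x • g y - y • g x) + (g ((x+y)*z) - (x+y) • g z - z • g (x+y))
        = (g (x*(y+z)) - x • g (y+z) - (y+z) • g x) + (g (y*z) - y • g z - z • g y) := by
    intro x y z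
    rw [← h, ← h, ← h, ← h, ← add_assoc x y z]
    abel
  have ss : ∀ x y z : F,
      (g (x*y + x*z) - g (x*y) - g (x*z)) - (g (x*z + y*z) - g (x*z) - g (y*z))
        = x • (g (y+z) - g y - g z) - z • (g (x+y) - g x - g y) := by
    intro x y z
    have hc := coc x y z
    rw [show (x+y)*z = x*z + y*z by ring, show x*(y+z) = x*y + x*z by ring] at hc
    simp only [add_smul, smul_sub] at hc ⊢
    linear_combination (norm := module) -hc
  have P1 : ∀ y z : F, g (z + y*z) - g z - g (y*z) = z • (g (1 + y) - g 1 - g y) := by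
    intro y z
    have hs := ss 1 y z
    simp only [one_mul, one_smul] at hs
    linear_combination (norm := module) -hs
  have hg0 : g 0 = 0 := by
    have h00 := P1 0 0
    rw [zero_smul, mul_zero, add_zero] at h00
    -- h00 : g 0 - g 0 - g 0 = 0
    have : -g 0 = 0 := by linear_combination (norm := module) h00
    linear_combination (norm := module) -this
  have SC : ∀ a b c : F, g (a*b + a*c) - g (a*b) - g (a*c) = a • (g (b+c) - g b - g c) := by
    intro a b c
    rcases eq_or_ne b 0 with hb | hb
    · subst hb
      rw [mul_zero, zero_add, hg0]
      have : g (a*c) - 0 - g (a*c) = 0 := by abel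
      rw [this]
      have : g (0 + c) = g c := by rw [zero_add]
      rw [this]
      have : g c - 0 - g c = (0 : X) := by abel
      rw [this, smul_zero]
    · have h1 := P1 (c * b⁻¹) (a*b)
      have h2 := P1 (c * b⁻¹) b
      rw [show c * b⁻¹ * (a*b) = a * c by field_simp] at h1
      rw [show c * b⁻¹ * b = c by field_simp] at h2
      rw [show a*b + a*c = a*b + a*c from rfl] at h1
      rw [h1, h2, smul_smul]
  set B : F → F → X := fun x y => g (x*y) - x • g y - y • g x + (x*y) • g 1 with hB
  have hsymm : ∀ x y, B x y = B y x := by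
    intro x y
    simp only [hB]
    rw [mul_comm x y]
    abel
  have haddl : ∀ x x' y, B (x+x') y = B x y + B x' y := by
    intro x x' y
    simp only [hB]
    have hsc := SC y x x'
    rw [mul_comm y x, mul_comm y x'] at hsc
    rw [show (x+x')*y = x*y + x'*y by ring]
    simp only [add_smul, smul_sub]
    linear_combination (norm := module) hsc
  have hcoc : ∀ x y z, B (x*y) z + z • B x y = B x (y*z) + x • B y z := by
    intro x y z
    simp only [hB]
    rw [mul_assoc x y z]
    simp only [smul_add, smul_sub, smul_smul]
    module
  have hone : ∀ y, B 1 y = 0 := by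
    intro y
    simp only [hB, one_mul, one_smul]
    abel
  obtain ⟨α₀, hα₀add, hα₀⟩ := SqData.exists_section ⟨B, hsymm, haddl, hcoc, hone⟩
  set α : F → X := fun x => α₀ x + x • g 1 with hα
  have hαadd : ∀ x y, α (x+y) = α x + α y := by
    intro x y
    simp only [hα]
    rw [hα₀add, add_smul]
    abel
  have hE : ∀ x y, g (x*y) - x • g y - y • g x = α (x*y) - x • α y - y • α x := by
    intro x y
    have hb := hα₀ x y
    simp only [hB] at hb
    simp only [hα]
    simp only [smul_add, smul_smul]
    linear_combination (norm := module) hb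
  refine ⟨α, fun x => f x - (2:F)⁻¹ • α (x^2) + x • α x, fun x => g x - α x,
    hαadd, ?_, ?_, ?_, ?_⟩
  · intro x y
    show f (x+y) - (2:F)⁻¹ • α ((x+y)^2) + (x+y) • α (x+y)
      = (f x - (2:F)⁻¹ • α (x^2) + x • α x) + (f y - (2:F)⁻¹ • α (y^2) + y • α y)
    have hfe := h x y
    have hEe := hE x y
    have h1 : α ((x+y)^2) = α (x^2) + (α (x*y) + α (x*y)) + α (y^2) := by
      rw [show (x+y)^2 = (x^2 + (x*y + x*y)) + y^2 by ring, hαadd, hαadd, hαadd]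
    have h3 : (2:F)⁻¹ • (α (x*y) + α (x*y)) = α (x*y) := by
      rw [← two_smul F (α (x*y)), smul_smul, inv_mul_cancel₀ hchar, one_smul]
    have h1' : (2:F)⁻¹ • α ((x+y)^2)
        = (2:F)⁻¹ • α (x^2) + α (x*y) + (2:F)⁻¹ • α (y^2) := by
      rw [h1, smul_add, smul_add, h3]
    rw [h1', hαadd x y]
    simp only [smul_add, add_smul]
    linear_combination (norm := module) hfe + hEe
  · intro x y
    show g (x*y) - α (x*y) = x • (g y - α y) + y • (g x - α x)
    have hEe := hE x y
    simp only [smul_sub]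
    linear_combination (norm := module) hEe
  · intro x
    show f x = (f x - (2:F)⁻¹ • α (x^2) + x • α x) + (2:F)⁻¹ • α (x^2) - x • α x
    abel
  · intro x
    show g x = (g x - α x) + α x
    abel
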